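/- arXiv:1512.00276 — 4 statements merged into one kernel-verified Lean document; each statement's English description precedes it below -/
import Mathlib

section
/- Let t ∈ ℝ with t ≥ 4. Define x₁ = √((t² + t·√(t² − 16))/2) and x₂ = √((t² − t·√(t² − 16))/2). Then x₁·x₂ = 2t and x₁² + x₂² = t². -/
/-- For t ≥ 4, the explicit values x₁ = √((t² + t√(t²−16))/2) and
x₂ = √((t² − t√(t²−16))/2) satisfy x₁x₂ = 2t and x₁² + x₂² = t². -/
theorem annulus_modulus_resolution (t : ℝ) (ht : 4 ≤ t)
    (x₁ x₂ : ℝ)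
    (hx₁ : x₁ = Real.sqrt ((t ^ 2 + t * Real.sqrt (t ^ 2 - 16)) / 2))
    (hx₂ : x₂ = Real.sqrt ((t ^ 2 - t * Real.sqrt (t ^ 2 - 16)) / 2)) :
    x₁ * x₂ = 2 * t ∧ x₁ ^ 2 + x₂ ^ 2 = t ^ 2 := by
  have ht0 : (0:ℝ) ≤ t := by linarith
  have h16 : (0:ℝ) ≤ t ^ 2 - 16 := by nlinarith
  have hs0 : 0 ≤ Real.sqrt (t ^ 2 - 16) := Real.sqrt_nonneg _
  have hsq : Real.sqrt (t ^ 2 - 16) ^ 2 = t ^ 2 - 16 := Real.sq_sqrt h16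
  have hsle : Real.sqrt (t ^ 2 - 16) ≤ t := by
    nlinarith [Real.sq_sqrt h16, Real.sqrt_nonneg (t ^ 2 - 16)]
  have ha : (0:ℝ) ≤ (t ^ 2 + t * Real.sqrt (t ^ 2 - 16)) / 2 := by nlinarith
  have hb : (0:ℝ) ≤ (t ^ 2 - t * Real.sqrt (t ^ 2 - 16)) / 2 := by nlinarith
  constructor
  · rw [hx₁, hx₂, ← Real.sqrt_mul ha]
    have : (t ^ 2 + t * Real.sqrt (t ^ 2 - 16)) / 2 *
        ((t ^ 2 - t * Real.sqrt (t ^ 2 - 16)) / 2) = (2 * t) ^ 2 := by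
      nlinarith [hsq]
    rw [this]
    exact Real.sqrt_sq (by linarith)
  · rw [hx₁, hx₂, Real.sq_sqrt ha, Real.sq_sqrt hb]
    ring
end

section
/- Let t ∈ ℝ with t > 0, and let e ∈ M₄(ℝ) = M₂(ℝ) ⊗ M₂(ℝ) be the Jones projection e = (1/(1+t))·(E₁₁ ⊗ E₂₂ + t·E₂₂ ⊗ E₁₁ + √t·(E₁₂ ⊗ E₂₁ + E₂₁ ⊗ E₁₂)). In M₈(ℝ) = M₂(ℝ) ⊗ M₂(ℝ) ⊗ M₂(ℝ), set e₁ = e ⊗ I₂ and e₂ = I₂ ⊗ e, where I₂ is the 2×2 identity matrix. Then e₁·e₂·e₁ = (t/(1+t)²)·e₁ and e₂·e₁·e₂ = (t/(1+t)²)·e₂. -/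
open Matrix Kronecker

set_option maxHeartbeats 1000000 in
/-- The shifted Jones projections e₁ = e ⊗ 1 and e₂ = 1 ⊗ e (suitably reassociated) in
M₂(ℝ) ⊗ M₂(ℝ) ⊗ M₂(ℝ) satisfy the Temperley–Lieb relations
e₁e₂e₁ = (t/(1+t)²)e₁ and e₂e₁e₂ = (t/(1+t)²)e₂. -/
theorem jones_projections_temperley_lieb (t : ℝ) (ht : 0 < t)
    (E : Fin 2 → Fin 2 → Matrix (Fin 2) (Fin 2) ℝ)
    (hE : ∀ i j, E i j = Matrix.single i j 1)
    (e : Matrix (Fin 2 × Fin 2) (Fin 2 × Fin 2) ℝ)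
    (he : e = (1 / (1 + t)) •
      (E 0 0 ⊗ₖ E 1 1 + t • (E 1 1 ⊗ₖ E 0 0) +
        Real.sqrt t • (E 0 1 ⊗ₖ E 1 0 + E 1 0 ⊗ₖ E 0 1)))
    (e₁ e₂ : Matrix ((Fin 2 × Fin 2) × Fin 2) ((Fin 2 × Fin 2) × Fin 2) ℝ)
    (he₁ : e₁ = e ⊗ₖ (1 : Matrix (Fin 2) (Fin 2) ℝ))
    (he₂ : e₂ = Matrix.reindex (Equiv.prodAssoc (Fin 2) (Fin 2) (Fin 2)).symm
        (Equiv.prodAssoc (Fin 2) (Fin 2) (Fin 2)).symm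
        ((1 : Matrix (Fin 2) (Fin 2) ℝ) ⊗ₖ e)) :
    e₁ * e₂ * e₁ = (t / (1 + t) ^ 2) • e₁ ∧
      e₂ * e₁ * e₂ = (t / (1 + t) ^ 2) • e₂ := by
  have hs : Real.sqrt t * Real.sqrt t = t := Real.mul_self_sqrt ht.le
  set s := Real.sqrt t with hsdef
  rw [← hs] at he ⊢
  have h1t : (1 : ℝ) + s * s ≠ 0 := by nlinarith
  simp only [hE] at he
  set σ := Equiv.prodAssoc (Fin 2) (Fin 2) (Fin 2) with hσ
  have key : ∀ A B : Matrix (Fin 2 × (Fin 2 × Fin 2)) (Fin 2 × (Fin 2 × Fin 2)) ℝ,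
      (reindex σ.symm σ.symm A) * (reindex σ.symm σ.symm B) = reindex σ.symm σ.symm (A * B) := by
    intro A B
    simp [Matrix.reindex_apply, Matrix.submatrix_mul_equiv]
  have hone : (1 : Matrix (Fin 2) (Fin 2) ℝ)
      = Matrix.single 0 0 1 + Matrix.single 1 1 1 := by
    ext i j; fin_cases i <;> fin_cases j <;> simp [Matrix.single, Matrix.one_apply]
  set F₁ : Matrix (Fin 2 × (Fin 2 × Fin 2)) (Fin 2 × (Fin 2 × Fin 2)) ℝ := (1 / (1 + s * s)) •
      (Matrix.single (0:Fin 2) 0 (1:ℝ) ⊗ₖ (Matrix.single (1:Fin 2) 1 (1:ℝ) ⊗ₖ 1)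
        + (s * s) • (Matrix.single (1:Fin 2) 1 (1:ℝ) ⊗ₖ (Matrix.single (0:Fin 2) 0 (1:ℝ) ⊗ₖ 1))
        + s • (Matrix.single (0:Fin 2) 1 (1:ℝ) ⊗ₖ (Matrix.single (1:Fin 2) 0 (1:ℝ) ⊗ₖ 1)
             + Matrix.single (1:Fin 2) 0 (1:ℝ) ⊗ₖ (Matrix.single (0:Fin 2) 1 (1:ℝ) ⊗ₖ 1))) with hF₁
  set F₂ : Matrix (Fin 2 × (Fin 2 × Fin 2)) (Fin 2 × (Fin 2 × Fin 2)) ℝ :=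
      (1 : Matrix (Fin 2) (Fin 2) ℝ) ⊗ₖ e with hF₂
  have hG : reindex σ σ e₁ = F₁ := by
    subst he₁ he
    simp [Matrix.reindex_apply, Matrix.smul_kronecker, Matrix.add_kronecker,
      Matrix.submatrix_add, Matrix.submatrix_smul, hσ, hF₁]
  have he₁' : e₁ = reindex σ.symm σ.symm F₁ := by
    rw [← hG]; simp
  have he₂' : e₂ = reindex σ.symm σ.symm F₂ := he₂
  have main₁ : F₁ * F₂ * F₁ = (s * s / (1 + s * s) ^ 2) • F₁ := by
    rw [hF₁, hF₂, he, hone]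
    simp [Matrix.add_kronecker, Matrix.kronecker_add,
      Matrix.smul_kronecker, Matrix.kronecker_smul, mul_add, add_mul,
      Matrix.smul_mul, Matrix.mul_smul, ← Matrix.mul_kronecker_mul,
      Matrix.single_mul_single_same, Matrix.single_mul_single_of_ne,
      Matrix.zero_kronecker, Matrix.kronecker_zero, smul_zero, mul_zero, zero_mul,
      add_zero, zero_add, one_mul, Matrix.zero_mul, Matrix.mul_zero]
    match_scalars <;> ring_nf <;>
      simp only [show ((1:ℝ)+s^2*2+s^4) = (1+s^2)*(1+s^2) from by ring, mul_inv] <;> ring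
  have main₂ : F₂ * F₁ * F₂ = (s * s / (1 + s * s) ^ 2) • F₂ := by
    rw [hF₁, hF₂, he, hone]
    simp [Matrix.add_kronecker, Matrix.kronecker_add,
      Matrix.smul_kronecker, Matrix.kronecker_smul, mul_add, add_mul,
      Matrix.smul_mul, Matrix.mul_smul, ← Matrix.mul_kronecker_mul,
      Matrix.single_mul_single_same, Matrix.single_mul_single_of_ne,
      Matrix.zero_kronecker, Matrix.kronecker_zero, smul_zero, mul_zero, zero_mul,
      add_zero, zero_add, one_mul, Matrix.zero_mul, Matrix.mul_zero]
    match_scalars <;> ring_nf <;>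
      simp only [show ((1:ℝ)+s^2*2+s^4) = (1+s^2)*(1+s^2) from by ring, mul_inv] <;> ring
  constructor
  · rw [he₁', he₂', key, key, main₁]
    simp [Matrix.reindex_apply, Matrix.submatrix_smul]
  · rw [he₁', he₂', key, key, main₂]
    simp [Matrix.reindex_apply, Matrix.submatrix_smul]
end

section
/- Let p be a nonzero polynomial with integer coefficients in one variable X. Then p(x) > 0 for every real x with 0 < x < 1 if and only if there exist a natural number n and nonnegative integers c₀, c₁, …, c_n such that p = Σ_{k=0}^{n} c_k · X^k · (1 − X)^{n−k}. -/
open Polynomial Finset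

lemma factorX (p : Polynomial ℤ) (hp : p ≠ 0) :
    ∃ (a : ℕ) (q : Polynomial ℤ), p = X ^ a * q ∧ q.coeff 0 ≠ 0 := by
  generalize hn : p.natDegree = n
  induction n using Nat.strong_induction_on generalizing p with
  | _ n ih =>
  by_cases h0 : p.coeff 0 = 0
  · have hdiv : p.divX * X = p := by
      have := p.divX_mul_X_add
      rwa [h0, map_zero, add_zero] at this
    have hq0 : p.divX ≠ 0 := by
      intro h; rw [← hdiv, h, zero_mul] at hp; exact hp rfl
    have hdeg : p.natDegree ≠ 0 := by
      intro h
      have := Polynomial.eq_C_of_natDegree_eq_zero h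
      rw [this, h0, map_zero] at hp; exact hp rfl
    have hlt : p.divX.natDegree < n := by
      rw [Polynomial.natDegree_divX_eq_natDegree_tsub_one]
      omega
    obtain ⟨a, q, h1, h2⟩ := ih _ hlt p.divX hq0 rfl
    exact ⟨a + 1, q, by rw [← hdiv, h1]; ring, h2⟩
  · exact ⟨0, p, by simp, h0⟩

lemma comp_one_sub_one_sub (s : Polynomial ℤ) : (s.comp (1 - X)).comp (1 - X) = s := by
  rw [Polynomial.comp_assoc]
  have : ((1 : Polynomial ℤ) - X).comp (1 - X) = X := by
    simp [Polynomial.sub_comp]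
  rw [this, Polynomial.comp_X]

lemma factorX1 (p : Polynomial ℤ) (hp : p ≠ 0) :
    ∃ (a b : ℕ) (q : Polynomial ℤ), p = X ^ a * (1 - X) ^ b * q ∧
      q.eval 0 ≠ 0 ∧ q.eval 1 ≠ 0 := by
  obtain ⟨a, q₁, h1, h2⟩ := factorX p hp
  rw [Polynomial.coeff_zero_eq_eval_zero] at h2
  have hq₁ : q₁ ≠ 0 := by rintro rfl; rw [mul_zero] at h1; exact hp h1
  have hcomp : (q₁.comp (1 - X)) ≠ 0 := by
    intro h
    have := comp_one_sub_one_sub q₁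
    rw [h, Polynomial.zero_comp] at this
    exact hq₁ this.symm
  obtain ⟨b, s, h3, h4⟩ := factorX _ hcomp
  rw [Polynomial.coeff_zero_eq_eval_zero] at h4
  have key : q₁ = (1 - X) ^ b * s.comp (1 - X) := by
    have := congrArg (fun r => Polynomial.comp r (1 - X)) h3
    rw [comp_one_sub_one_sub] at this
    rw [this, Polynomial.mul_comp, Polynomial.pow_comp, Polynomial.X_comp]
  refine ⟨a, b, s.comp (1 - X), by rw [h1, key]; ring, ?_, ?_⟩
  · intro h
    apply h2
    rw [key, Polynomial.eval_mul]
    simp [h]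
  · rw [Polynomial.eval_comp]
    simpa using h4

lemma choose_prod : ∀ (j N k : ℕ), j ≤ k → k ≤ N →
    (N - j).choose (k - j) * ∏ i ∈ range j, (N - i) =
      N.choose k * ∏ i ∈ range j, (k - i) := by
  intro j
  induction j with
  | zero => simp
  | succ j ih =>
    intro N k hjk hkN
    have hM : N - j = (N - (j+1)) + 1 := by omega
    have hK : k - j = (k - (j+1)) + 1 := by omega
    have key : (N - (j+1)).choose (k - (j+1)) * (N - j) = (N - j).choose (k - j) * (k - j) := by
      rw [hM, hK, mul_comm]
      exact Nat.add_one_mul_choose_eq _ _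
    rw [prod_range_succ, prod_range_succ, ← mul_assoc, ← mul_assoc,
      mul_right_comm, key, mul_right_comm, ih N k (by omega) hkN]

lemma choose_ratio (N k j : ℕ) (hjk : j ≤ k) (hkN : k ≤ N) :
    ((N - j).choose (k - j) : ℝ) =
      (N.choose k : ℝ) * ∏ i ∈ range j, (((k:ℝ) - i) / ((N:ℝ) - i)) := by
  have h := choose_prod j N k hjk hkN
  have hcast : ((N - j).choose (k - j) : ℝ) * ∏ i ∈ range j, ((N:ℝ) - i) =
      (N.choose k : ℝ) * ∏ i ∈ range j, ((k:ℝ) - i) := by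
    have := congrArg (Nat.cast : ℕ → ℝ) h
    push_cast at this
    have e1 : ∏ i ∈ range j, (((N - i : ℕ)):ℝ) = ∏ i ∈ range j, ((N:ℝ) - i) :=
      prod_congr rfl fun i hi => by
        rw [Nat.cast_sub (by simp only [mem_range] at hi; omega)]
    have e2 : ∏ i ∈ range j, (((k - i : ℕ)):ℝ) = ∏ i ∈ range j, ((k:ℝ) - i) :=
      prod_congr rfl fun i hi => by
        rw [Nat.cast_sub (by simp only [mem_range] at hi; omega)]
    rw [e1, e2] at this
    exact this
  have hpos : (0:ℝ) < ∏ i ∈ range j, ((N:ℝ) - i) := by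
    apply prod_pos
    intro i hi
    simp only [mem_range] at hi
    have : i < N := by omega
    have : (i:ℝ) < N := by exact_mod_cast this
    linarith
  rw [prod_div_distrib, mul_div_assoc', eq_div_iff (ne_of_gt hpos), hcast]

lemma prod_diff_bound : ∀ (j : ℕ) (u v : ℕ → ℝ),
    (∀ i < j, 0 ≤ u i ∧ u i ≤ 1) → (∀ i < j, 0 ≤ v i ∧ v i ≤ 1) →
    |∏ i ∈ range j, u i - ∏ i ∈ range j, v i| ≤ ∑ i ∈ range j, |u i - v i| := by
  intro j
  induction j with
  | zero => simp
  | succ j ih =>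
    intro u v hu hv
    rw [prod_range_succ, prod_range_succ, sum_range_succ]
    have hPu : 0 ≤ ∏ i ∈ range j, u i ∧ ∏ i ∈ range j, u i ≤ 1 := by
      constructor
      · exact prod_nonneg fun i hi => (hu i (by simp at hi; omega)).1
      · exact prod_le_one (fun i hi => (hu i (by simp at hi; omega)).1)
          (fun i hi => (hu i (by simp at hi; omega)).2)
    have key : (∏ i ∈ range j, u i) * u j - (∏ i ∈ range j, v i) * v j =
        (∏ i ∈ range j, u i) * (u j - v j) + v j * ((∏ i ∈ range j, u i) - ∏ i ∈ range j, v i) := by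
      ring
    rw [key]
    refine (abs_add_le _ _).trans ?_
    have h1 : |(∏ i ∈ range j, u i) * (u j - v j)| ≤ |u j - v j| := by
      rw [abs_mul]
      calc |∏ i ∈ range j, u i| * |u j - v j| ≤ 1 * |u j - v j| := by
            apply mul_le_mul_of_nonneg_right _ (abs_nonneg _)
            rw [abs_of_nonneg hPu.1]; exact hPu.2
        _ = |u j - v j| := one_mul _
    have h2 : |v j * ((∏ i ∈ range j, u i) - ∏ i ∈ range j, v i)| ≤
        ∑ i ∈ range j, |u i - v i| := by
      rw [abs_mul]
      calc |v j| * |(∏ i ∈ range j, u i) - ∏ i ∈ range j, v i|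
          ≤ 1 * |(∏ i ∈ range j, u i) - ∏ i ∈ range j, v i| := by
            apply mul_le_mul_of_nonneg_right _ (abs_nonneg _)
            rw [abs_of_nonneg (hv j (by omega)).1]; exact (hv j (by omega)).2
        _ = |(∏ i ∈ range j, u i) - ∏ i ∈ range j, v i| := one_mul _
        _ ≤ ∑ i ∈ range j, |u i - v i| :=
            ih u v (fun i hi => hu i (by omega)) (fun i hi => hv i (by omega))
    linarith

lemma xpow_bernstein (N j : ℕ) (hjN : j ≤ N) :
    ∑ k ∈ range (N + 1),
      (if j ≤ k then (((N - j).choose (k - j) : ℤ) : Polynomial ℤ) else 0) *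
        X ^ k * (1 - X) ^ (N - k) = X ^ j := by
  have hsub : Finset.Ico j (N + 1) ⊆ range (N + 1) := by
    intro x hx; simp only [mem_Ico, mem_range] at *; omega
  rw [← Finset.sum_subset hsub ?_]
  · rw [Finset.sum_congr rfl (g := fun k =>
      (((N - j).choose (k - j) : ℤ) : Polynomial ℤ) * X ^ k * (1 - X) ^ (N - k)) ?_]
    · rw [Finset.sum_Ico_eq_sum_range]
      have : ∀ i ∈ range (N + 1 - j),
          (((N - j).choose (j + i - j) : ℤ) : Polynomial ℤ) * X ^ (j + i) * (1 - X) ^ (N - (j + i))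
          = X ^ j * (X ^ i * (1 - X) ^ ((N - j) - i) * ((N - j).choose i : Polynomial ℤ)) := by
        intro i hi
        simp only [mem_range] at hi
        rw [show j + i - j = i by omega, show N - (j + i) = (N - j) - i by omega,
          pow_add]
        push_cast
        ring
      rw [Finset.sum_congr rfl this, ← Finset.mul_sum]
      rw [show N + 1 - j = (N - j) + 1 by omega]
      rw [← add_pow X (1 - X) (N - j)]
      simp
    · intro k hk
      simp only [mem_Ico] at hk
      rw [if_pos hk.1]
  · intro k hk h2
    simp only [mem_range, mem_Ico] at *
    rw [if_neg (by omega), zero_mul, zero_mul]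

lemma bernstein_identity (q : Polynomial ℤ) (N : ℕ) (hN : q.natDegree < N) :
    q = ∑ k ∈ range (N + 1),
      C (∑ j ∈ range (q.natDegree + 1),
          q.coeff j * (if j ≤ k then ((N - j).choose (k - j) : ℤ) else 0)) *
        X ^ k * (1 - X) ^ (N - k) := by
  symm
  calc ∑ k ∈ range (N + 1),
      C (∑ j ∈ range (q.natDegree + 1),
          q.coeff j * (if j ≤ k then ((N - j).choose (k - j) : ℤ) else 0)) *
        X ^ k * (1 - X) ^ (N - k)
      = ∑ k ∈ range (N + 1), ∑ j ∈ range (q.natDegree + 1),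
          C (q.coeff j) * ((if j ≤ k then (((N - j).choose (k - j) : ℤ) : Polynomial ℤ) else 0) *
            X ^ k * (1 - X) ^ (N - k)) := by
        apply Finset.sum_congr rfl
        intro k hk
        rw [map_sum, Finset.sum_mul, Finset.sum_mul]
        apply Finset.sum_congr rfl
        intro j hj
        rw [map_mul]
        split_ifs with h
        · rw [show ((((N - j).choose (k - j) : ℤ)) : Polynomial ℤ) = C (((N - j).choose (k - j) : ℤ)) from (Polynomial.C_eq_intCast _).symm]; ring
        · simp
    _ = ∑ j ∈ range (q.natDegree + 1), ∑ k ∈ range (N + 1),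
          C (q.coeff j) * ((if j ≤ k then (((N - j).choose (k - j) : ℤ) : Polynomial ℤ) else 0) *
            X ^ k * (1 - X) ^ (N - k)) := Finset.sum_comm
    _ = ∑ j ∈ range (q.natDegree + 1), C (q.coeff j) * X ^ j := by
        apply Finset.sum_congr rfl
        intro j hj
        simp only [mem_range] at hj
        rw [← Finset.mul_sum, xpow_bernstein N j (by omega)]
    _ = q := by
        conv_rhs => rw [Polynomial.as_sum_range' q (q.natDegree + 1) (by omega)]
        apply Finset.sum_congr rfl
        intro j hj
        rw [Polynomial.C_mul_X_pow_eq_monomial]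

lemma aeval_zero_real (q : Polynomial ℤ) :
    Polynomial.aeval (0:ℝ) q = ((q.eval 0 : ℤ) : ℝ) := by
  rw [Polynomial.aeval_def, Polynomial.eval₂_at_zero, Polynomial.coeff_zero_eq_eval_zero]
  simp

lemma aeval_one_real (q : Polynomial ℤ) :
    Polynomial.aeval (1:ℝ) q = ((q.eval 1 : ℤ) : ℝ) := by
  rw [Polynomial.aeval_def, Polynomial.eval₂_at_one]
  simp

lemma q_pos_closed (q : Polynomial ℤ)
    (hq : ∀ x : ℝ, 0 < x → x < 1 → 0 < Polynomial.aeval x q)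
    (h0 : q.eval 0 ≠ 0) (h1 : q.eval 1 ≠ 0) :
    ∀ x : ℝ, 0 ≤ x → x ≤ 1 → 0 < Polynomial.aeval x q := by
  set f : ℝ → ℝ := fun x => Polynomial.aeval x q with hf
  have hfc : Continuous f := Polynomial.continuous_aeval q
  have key : ∀ y : ℝ, y ∈ closure (Set.Ioo (0:ℝ) 1) → 0 ≤ f y := by
    intro y hy
    have hne : (nhdsWithin y (Set.Ioo (0:ℝ) 1)).NeBot :=
      mem_closure_iff_nhdsWithin_neBot.mp hy
    have htend : Filter.Tendsto f (nhdsWithin y (Set.Ioo (0:ℝ) 1)) (nhds (f y)) :=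
      (hfc.tendsto y).mono_left nhdsWithin_le_nhds
    refine ge_of_tendsto htend ?_
    filter_upwards [self_mem_nhdsWithin] with x hx
    exact (hq x hx.1 hx.2).le
  have hclo : closure (Set.Ioo (0:ℝ) 1) = Set.Icc 0 1 := closure_Ioo one_ne_zero.symm
  intro x hx0 hx1
  rcases eq_or_lt_of_le hx0 with h | h
  · have : f 0 = ((q.eval 0 : ℤ) : ℝ) := by
      exact aeval_zero_real q
    have h0le : 0 ≤ f 0 := key 0 (by rw [hclo]; exact ⟨le_refl 0, zero_le_one⟩)
    rw [← h]
    show 0 < f 0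
    rw [this] at h0le ⊢
    rcases h0le.lt_or_eq with h' | h'
    · exact h'
    · exact absurd (by exact_mod_cast h'.symm) h0
  · rcases eq_or_lt_of_le hx1 with h1' | h1'
    · have : f 1 = ((q.eval 1 : ℤ) : ℝ) := by
        exact aeval_one_real q
      have h1le : 0 ≤ f 1 := key 1 (by rw [hclo]; exact ⟨zero_le_one, le_refl 1⟩)
      rw [h1']
      show 0 < f 1
      rw [this] at h1le ⊢
      rcases h1le.lt_or_eq with h' | h'
      · exact h'
      · exact absurd (by exact_mod_cast h'.symm) h1
    · exact hq x h h1'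

lemma bernstein_coeff_nonneg (q : Polynomial ℤ)
    (hq : ∀ x : ℝ, 0 ≤ x → x ≤ 1 → 0 < Polynomial.aeval x q) :
    ∃ N, q.natDegree < N ∧ ∀ k ≤ N,
      0 ≤ ∑ j ∈ range (q.natDegree + 1),
        q.coeff j * (if j ≤ k then ((N - j).choose (k - j) : ℤ) else 0) := by
  set d := q.natDegree with hd
  set f : ℝ → ℝ := fun x => Polynomial.aeval x q with hf
  have hfc : Continuous f := Polynomial.continuous_aeval q
  obtain ⟨x₀, hx₀, hmin⟩ := isCompact_Icc.exists_isMinOn (α := ℝ) (s := Set.Icc (0:ℝ) 1)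
    (Set.nonempty_Icc.mpr zero_le_one) hfc.continuousOn
  set ε := f x₀ with hε
  have hεpos : 0 < ε := hq x₀ hx₀.1 hx₀.2
  set A : ℝ := ∑ j ∈ range (d + 1), |(q.coeff j : ℝ)| with hA
  have hAnn : 0 ≤ A := Finset.sum_nonneg fun j _ => abs_nonneg _
  obtain ⟨N, hN⟩ := exists_nat_gt ((d : ℝ) + (A * d ^ 2 + 1) / ε)
  have hdN : (d : ℝ) < N := by
    have : 0 ≤ (A * d ^ 2 + 1) / ε := by positivity
    linarith
  have hdNnat : d < N := by exact_mod_cast hdN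
  have hNd : (0:ℝ) < (N : ℝ) - d := by linarith
  have herr : A * d ^ 2 / ((N:ℝ) - d) < ε := by
    rw [div_lt_iff₀ hNd]
    have h1 : (A * d ^ 2 + 1) / ε < (N:ℝ) - d := by
      have := hN; linarith
    have h2 : A * d ^ 2 + 1 < ε * ((N:ℝ) - d) := by
      rw [div_lt_iff₀ hεpos] at h1
      linarith [h1]
    linarith
  refine ⟨N, hdNnat, ?_⟩
  intro k hk
  have hNpos : (0:ℝ) < N := by
    have : (0:ℝ) ≤ d := Nat.cast_nonneg d
    linarith
  set t : ℝ := (k : ℝ) / N with ht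
  have ht0 : 0 ≤ t := by positivity
  have ht1 : t ≤ 1 := by
    rw [div_le_one hNpos]; exact_mod_cast hk
  -- weights
  set w : ℕ → ℝ := fun j => if j ≤ k then ∏ i ∈ range j, (((k:ℝ) - i) / ((N:ℝ) - i)) else 0
    with hw
  -- per-term bound
  have hterm : ∀ j ∈ range (d + 1), |w j - t ^ j| ≤ (d:ℝ) ^ 2 / ((N:ℝ) - d) := by
    intro j hj
    simp only [mem_range] at hj
    have hjd : j ≤ d := by omega
    by_cases hjk : j ≤ k
    · rw [hw]
      simp only [if_pos hjk]
      have hu : ∀ i < j, 0 ≤ ((k:ℝ) - i) / ((N:ℝ) - i) ∧ ((k:ℝ) - i) / ((N:ℝ) - i) ≤ 1 := by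
        intro i hi
        have hik : (i:ℝ) ≤ k := by exact_mod_cast le_trans (le_of_lt hi) hjk
        have hiN : (i:ℝ) < N := by
          have : (i:ℝ) ≤ d := by exact_mod_cast le_trans (Nat.le_of_lt_succ (lt_of_lt_of_le hi (by omega))) (le_refl d)
          linarith
        have hkN' : (k:ℝ) ≤ N := by exact_mod_cast hk
        constructor
        · apply div_nonneg <;> linarith
        · rw [div_le_one (by linarith)]; linarith
      have hv : ∀ i < j, 0 ≤ t ∧ t ≤ 1 := fun i _ => ⟨ht0, ht1⟩
      have hb := prod_diff_bound j (fun i => ((k:ℝ) - i) / ((N:ℝ) - i)) (fun _ => t) hu hv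
      rw [Finset.prod_const, Finset.card_range] at hb
      refine le_trans hb ?_
      have hsingle : ∀ i ∈ range j, |((k:ℝ) - i) / ((N:ℝ) - i) - t| ≤ (d:ℝ) / ((N:ℝ) - d) := by
        intro i hi
        simp only [mem_range] at hi
        have hik : (i:ℝ) ≤ k := by exact_mod_cast le_trans (le_of_lt hi) hjk
        have hid : (i:ℝ) ≤ d := by
          have : i ≤ d := by omega
          exact_mod_cast this
        have hiN : (i:ℝ) < N := by linarith
        have hkN' : (k:ℝ) ≤ N := by exact_mod_cast hk
        have heq : ((k:ℝ) - i) / ((N:ℝ) - i) - t =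
            -((i:ℝ) * ((N:ℝ) - k)) / (((N:ℝ) - i) * N) := by
          rw [ht, div_sub_div _ _ (by linarith : (N:ℝ) - i ≠ 0) (ne_of_gt hNpos)]
          congr 1
          ring
        rw [heq, abs_div, abs_neg,
          abs_of_nonneg (mul_nonneg (Nat.cast_nonneg i) (by linarith) : (0:ℝ) ≤ (i:ℝ) * ((N:ℝ) - k)),
          abs_of_nonneg (mul_nonneg (by linarith) hNpos.le : (0:ℝ) ≤ ((N:ℝ) - i) * N)]
        have hnum : (i:ℝ) * ((N:ℝ) - k) ≤ (d:ℝ) * N := by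
          apply mul_le_mul hid (by linarith) (by linarith) (Nat.cast_nonneg d)
        have hden : ((N:ℝ) - d) * N ≤ ((N:ℝ) - i) * N := by
          apply mul_le_mul_of_nonneg_right (by linarith) (le_of_lt hNpos)
        calc (i:ℝ) * ((N:ℝ) - k) / (((N:ℝ) - i) * N)
            ≤ (d:ℝ) * N / (((N:ℝ) - d) * N) := by
              exact div_le_div₀ (by positivity) hnum (mul_pos hNd hNpos) hden
          _ = (d:ℝ) / ((N:ℝ) - d) := by
              rw [mul_div_mul_right _ _ (ne_of_gt hNpos)]
      refine le_trans (Finset.sum_le_sum hsingle) ?_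
      rw [Finset.sum_const, Finset.card_range, nsmul_eq_mul]
      have hjd' : (j:ℝ) ≤ d := by exact_mod_cast hjd
      calc (j:ℝ) * ((d:ℝ) / ((N:ℝ) - d)) ≤ (d:ℝ) * ((d:ℝ) / ((N:ℝ) - d)) :=
            mul_le_mul_of_nonneg_right hjd' (by positivity)
        _ = (d:ℝ)^2 / ((N:ℝ) - d) := by ring
    · rw [hw]
      simp only [if_neg hjk]
      rw [zero_sub, abs_neg, abs_of_nonneg (pow_nonneg ht0 j)]
      have hj1 : 1 ≤ j := by omega
      have hd1 : (1:ℝ) ≤ d := by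
        have : 1 ≤ d := by omega
        exact_mod_cast this
      have h1 : t ^ j ≤ t ^ 1 := pow_le_pow_of_le_one ht0 ht1 hj1
      rw [pow_one] at h1
      have h2 : t ≤ (d:ℝ) / ((N:ℝ) - d) := by
        rw [ht, div_le_div_iff₀ hNpos hNd]
        have hkd : (k:ℝ) ≤ d := by
          have : k ≤ d := by omega
          exact_mod_cast this
        nlinarith [Nat.cast_nonneg (α := ℝ) k]
      have h3 : (d:ℝ) / ((N:ℝ) - d) ≤ (d:ℝ)^2 / ((N:ℝ) - d) := by
        gcongr
        nlinarith
      linarith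
  set S : ℝ := ∑ j ∈ range (d + 1), (q.coeff j : ℝ) * w j with hS
  have hft : f t = ∑ j ∈ range (d + 1), (q.coeff j : ℝ) * t ^ j := by
    show Polynomial.aeval t q = _
    rw [Polynomial.aeval_eq_sum_range]
    apply Finset.sum_congr rfl
    intro j hj
    rw [zsmul_eq_mul]
  have hdiff : |S - f t| ≤ A * ((d:ℝ) ^ 2 / ((N:ℝ) - d)) := by
    rw [hS, hft, ← Finset.sum_sub_distrib]
    refine (Finset.abs_sum_le_sum_abs _ _).trans ?_
    rw [hA, Finset.sum_mul]
    apply Finset.sum_le_sum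
    intro j hj
    rw [← mul_sub, abs_mul]
    exact mul_le_mul_of_nonneg_left (hterm j hj) (abs_nonneg _)
  have hftε : ε ≤ f t := isMinOn_iff.mp hmin t ⟨ht0, ht1⟩
  have herr' : A * ((d:ℝ) ^ 2 / ((N:ℝ) - d)) < ε := by
    rw [mul_div_assoc] at herr
    exact herr
  have hSpos : 0 < S := by
    have h1 : |S - f t| < ε := lt_of_le_of_lt hdiff herr'
    have h2 := abs_lt.mp h1
    linarith [h2.1]
  have hcast : ((∑ j ∈ range (d + 1),
        q.coeff j * (if j ≤ k then ((N - j).choose (k - j) : ℤ) else 0) : ℤ) : ℝ)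
      = (N.choose k : ℝ) * S := by
    rw [Int.cast_sum, hS, Finset.mul_sum]
    apply Finset.sum_congr rfl
    intro j hj
    rw [Int.cast_mul, hw]
    by_cases hjk : j ≤ k
    · simp only [if_pos hjk]
      rw [Int.cast_natCast, choose_ratio N k j hjk hk]
      ring
    · simp only [if_neg hjk]
      simp
  have hpos : (0:ℝ) < (N.choose k : ℝ) * S :=
    mul_pos (by exact_mod_cast Nat.choose_pos hk) hSpos
  rw [← hcast] at hpos
  exact_mod_cast hpos.le

/-- A nonzero integer polynomial is strictly positive on the open interval (0,1) iff it is
a finite nonnegative-integer combination of the Bernstein monomials X^k(1−X)^(n−k).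
This computes the positive cone of the dimension group of the GICAR algebra:
(K₀, K₀⁺) ≅ (ℤ[x], P⁺(0,1)). -/
theorem pos_on_unit_interval_iff_bernstein (p : Polynomial ℤ) (hp : p ≠ 0) :
    (∀ x : ℝ, 0 < x → x < 1 → 0 < Polynomial.aeval x p) ↔
      ∃ (n : ℕ) (c : ℕ → ℕ),
        p = ∑ k ∈ Finset.range (n + 1),
          Polynomial.C ((c k : ℤ)) * X ^ k * (1 - X) ^ (n - k) := by
  constructor
  · intro hpos
    obtain ⟨a, b, q, hfact, h0, h1⟩ := factorX1 p hp
    have hqIoo : ∀ x : ℝ, 0 < x → x < 1 → 0 < Polynomial.aeval x q := by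
      intro x hx0 hx1
      have hx := hpos x hx0 hx1
      rw [hfact] at hx
      simp only [map_mul, map_pow, Polynomial.aeval_X, map_sub, map_one] at hx
      have hc : (0:ℝ) < x ^ a * (1 - x) ^ b := by
        have : (0:ℝ) < 1 - x := by linarith
        positivity
      by_contra hy
      push_neg at hy
      nlinarith
    have hqIcc := q_pos_closed q hqIoo h0 h1
    obtain ⟨N, hdN, hE⟩ := bernstein_coeff_nonneg q hqIcc
    set e : ℕ → ℤ := fun k => ∑ j ∈ range (q.natDegree + 1),
        q.coeff j * (if j ≤ k then ((N - j).choose (k - j) : ℤ) else 0) with he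
    have hid := bernstein_identity q N hdN
    refine ⟨N + a + b, fun m => if a ≤ m ∧ m ≤ N + a then (e (m - a)).toNat else 0, ?_⟩
    have hsub : Finset.Ico a (N + a + 1) ⊆ range (N + a + b + 1) := by
      intro m hm
      simp only [mem_Ico, mem_range] at *
      omega
    rw [← Finset.sum_subset hsub ?_]
    · rw [Finset.sum_Ico_eq_sum_range, show N + a + 1 - a = N + 1 by omega]
      rw [hfact, hid, Finset.mul_sum]
      apply Finset.sum_congr rfl
      intro i hi
      simp only [mem_range] at hi
      have hcond : a ≤ a + i ∧ a + i ≤ N + a := ⟨by omega, by omega⟩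
      beta_reduce
      rw [if_pos hcond, show a + i - a = i by omega,
        Int.toNat_of_nonneg (hE i (by omega)),
        show N + a + b - (a + i) = (N - i) + b by omega]
      rw [pow_add, pow_add]
      ring
    · intro m hm hm2
      simp only [mem_range, mem_Ico] at *
      rw [if_neg (by omega)]
      simp
  · rintro ⟨n, c, rfl⟩
    intro x hx0 hx1
    rw [map_sum]
    have hterm : ∀ k ∈ range (n + 1),
        Polynomial.aeval x (C ((c k : ℤ)) * X ^ k * (1 - X) ^ (n - k)) =
          (c k : ℝ) * x ^ k * (1 - x) ^ (n - k) := by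
      intro k hk
      simp
    rw [Finset.sum_congr rfl hterm]
    have hcne : ∃ k ∈ range (n + 1), c k ≠ 0 := by
      by_contra hc
      push_neg at hc
      apply hp
      rw [Finset.sum_eq_zero]
      intro k hk
      rw [hc k hk]
      simp
    obtain ⟨k, hk, hck⟩ := hcne
    apply Finset.sum_pos'
    · intro i _
      have h1x : (0:ℝ) < 1 - x := by linarith
      positivity
    · refine ⟨k, hk, ?_⟩
      have hcpos : (0:ℝ) < (c k : ℝ) := by exact_mod_cast Nat.pos_of_ne_zero hck
      have h1x : (0:ℝ) < 1 - x := by linarith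
      positivity
end

section
/- Let t ∈ ℝ with t ≥ 4. Define x₁ = √((t² + t·√(t² − 16))/2), x₂ = √((t² − t·√(t² − 16))/2), x₃ = (x₂² + 1)/x₁ and x₄ = (x₃² + 1)/x₂. Then x₁x₄ − x₂x₃ = ½(t + t⁻¹). -/
/-- For a modulus t ≥ 4, the cluster variables x₁ = √((t² + t√(t²−16))/2),
x₂ = √((t² − t√(t²−16))/2) and x₃ = (x₂²+1)/x₁, x₄ = (x₃²+1)/x₂ satisfy the
required equality x₁x₄ − x₂x₃ = ½(t + t⁻¹). -/
theorem cluster_variables_chebyshev_argument (t : ℝ) (ht : 4 ≤ t)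
    (x₁ x₂ x₃ x₄ : ℝ)
    (hx₁ : x₁ = Real.sqrt ((t ^ 2 + t * Real.sqrt (t ^ 2 - 16)) / 2))
    (hx₂ : x₂ = Real.sqrt ((t ^ 2 - t * Real.sqrt (t ^ 2 - 16)) / 2))
    (hx₃ : x₃ = (x₂ ^ 2 + 1) / x₁) (hx₄ : x₄ = (x₃ ^ 2 + 1) / x₂) :
    x₁ * x₄ - x₂ * x₃ = (1 / 2) * (t + t⁻¹) := by
  have ht0 : (0:ℝ) < t := by linarith
  set s := Real.sqrt (t ^ 2 - 16) with hs
  have hs0 : 0 ≤ s := Real.sqrt_nonneg _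
  have hs2 : s ^ 2 = t ^ 2 - 16 := Real.sq_sqrt (by nlinarith)
  have hst : s < t := by nlinarith
  have hA : (0:ℝ) < (t ^ 2 + t * s) / 2 := by nlinarith
  have hB : (0:ℝ) < (t ^ 2 - t * s) / 2 := by nlinarith
  have hx1sq : x₁ ^ 2 = (t ^ 2 + t * s) / 2 := by rw [hx₁]; exact Real.sq_sqrt hA.le
  have hx2sq : x₂ ^ 2 = (t ^ 2 - t * s) / 2 := by rw [hx₂]; exact Real.sq_sqrt hB.le
  have hx1pos : 0 < x₁ := by rw [hx₁]; exact Real.sqrt_pos.mpr hA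
  have hx2pos : 0 < x₂ := by rw [hx₂]; exact Real.sqrt_pos.mpr hB
  have hprod : x₁ * x₂ = 2 * t := by
    have h : (x₁ * x₂) ^ 2 = (2 * t) ^ 2 := by
      have := hs2; nlinarith [hx1sq, hx2sq]
    nlinarith [mul_pos hx1pos hx2pos]
  have hsum : x₁ ^ 2 + x₂ ^ 2 = t ^ 2 := by rw [hx1sq, hx2sq]; ring
  have h3 : x₁ * x₃ = x₂ ^ 2 + 1 := by
    rw [hx₃]; field_simp
  have h4 : x₂ * x₄ = x₃ ^ 2 + 1 := by
    rw [hx₄]; field_simp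
  have key : (x₁ * x₄ - x₂ * x₃) * (x₁ * x₂) = t ^ 2 + 1 := by
    have e : (x₁ * x₄ - x₂ * x₃) * (x₁ * x₂)
        = x₁ ^ 2 * (x₂ * x₄) - x₂ ^ 2 * (x₁ * x₃) := by ring
    rw [e, h4, h3]
    have e2 : x₁ ^ 2 * (x₃ ^ 2 + 1) = (x₁ * x₃) ^ 2 + x₁ ^ 2 := by ring
    rw [e2, h3]
    linear_combination hsum
  have hE : x₁ * x₄ - x₂ * x₃ = (t ^ 2 + 1) / (2 * t) := by
    rw [← hprod, eq_div_iff (by positivity : x₁ * x₂ ≠ 0)]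
    exact key
  rw [hE]
  field_simp
end
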